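/- For k ≥ 1 there is no vector v ∈ ℝ^{8+k} with all positive entries satisfying U v = [1]_{(8+k)×1}, where U is the block matrix [[U₁₁, U₁₂, 0_{5×k}],[U₂₁, U₂₂, 1_{3×k}],[0_{k×5}, 1_{k×3}, 3I_k]] and [U₁₁ U₁₂; U₂₁ U₂₂] is the 8×8 Gram matrix U₈. -/
import Mathlib


noncomputable def U8 : Matrix (Fin 8) (Fin 8) ℝ :=
  !![3,1,1,1,0,0,0,1;
     1,3,1,0,1,1,0,0;
     1,1,3,0,0,0,1,0;
     1,0,0,3,1,1,1,0;
     0,1,0,1,3,0,1,1;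
     0,1,0,1,0,3,1,1;
     0,0,1,1,1,1,3,1;
     1,0,0,0,1,1,1,3]

/-- The `(8+k) × (8+k)` block matrix
`[[U₁₁, U₁₂, 0],[U₂₁, U₂₂, 1],[0, 1, 3I]]`, where `[U₁₁ U₁₂; U₂₁ U₂₂] = U8`
is split into blocks of sizes `5` and `3`. -/
noncomputable def bigU (k : ℕ) : Matrix (Fin (8+k)) (Fin (8+k)) ℝ :=
  fun i j =>
    if hi : (i : ℕ) < 8 then
      if hj : (j : ℕ) < 8 then U8 ⟨i, hi⟩ ⟨j, hj⟩
      else if 5 ≤ (i : ℕ) then 1 else 0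
    else
      if hj : (j : ℕ) < 8 then (if 5 ≤ (j : ℕ) then 1 else 0)
      else if (i : ℕ) = (j : ℕ) then 3 else 0

/-- Auxiliary coefficient vector: row combination
`row₁ - row₂ - row₄ - row₅ + 2·row₆` of `bigU k`. -/
noncomputable def cvec (k : ℕ) (j : Fin (8+k)) : ℝ :=
  bigU k ⟨1, by omega⟩ j - bigU k ⟨2, by omega⟩ j - bigU k ⟨4, by omega⟩ j
    - bigU k ⟨5, by omega⟩ j + 2 * bigU k ⟨6, by omega⟩ j

lemma cvec_nonneg (k : ℕ) (j : Fin (8+k)) : 0 ≤ cvec k j := by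
  obtain ⟨j, hj⟩ := j
  by_cases hj8 : j < 8
  · interval_cases j <;> norm_num [cvec, bigU, U8]
  · norm_num [cvec, bigU, hj8]

lemma cvec_six (k : ℕ) : cvec k ⟨6, by omega⟩ = 3 := by
  norm_num [cvec, bigU, U8]

set_option maxHeartbeats 1000000 in
/-- For `k ≥ 1` there is no positive solution of `bigU k • v = (1,…,1)ᵀ`. -/
theorem stmt17 (k : ℕ) (hk : 1 ≤ k) :
    ¬ ∃ v : Fin (8+k) → ℝ,
        (∀ i, 0 < v i) ∧ (bigU k).mulVec v = fun _ => 1 := by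
  rintro ⟨v, hv, huv⟩
  have hrow : ∀ i : Fin (8+k), ∑ j, bigU k i j * v j = 1 := by
    intro i
    have h := congrFun huv i
    simpa only [Matrix.mulVec, dotProduct] using h
  have key : ∑ j, cvec k j * v j = 0 := by
    have hsplit : ∑ j, cvec k j * v j =
        (∑ j, bigU k ⟨1, by omega⟩ j * v j) - (∑ j, bigU k ⟨2, by omega⟩ j * v j)
          - (∑ j, bigU k ⟨4, by omega⟩ j * v j) - (∑ j, bigU k ⟨5, by omega⟩ j * v j)
          + 2 * ∑ j, bigU k ⟨6, by omega⟩ j * v j := by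
      rw [Finset.mul_sum, ← Finset.sum_sub_distrib, ← Finset.sum_sub_distrib,
        ← Finset.sum_sub_distrib, ← Finset.sum_add_distrib]
      exact Finset.sum_congr rfl fun j _ => by rw [cvec]; ring
    rw [hsplit, hrow, hrow, hrow, hrow, hrow]; ring
  have hle : cvec k ⟨6, by omega⟩ * v ⟨6, by omega⟩ ≤ ∑ j, cvec k j * v j :=
    Finset.single_le_sum (f := fun j => cvec k j * v j)
      (fun j _ => mul_nonneg (cvec_nonneg k j) (hv j).le)
      (Finset.mem_univ (⟨6, by omega⟩ : Fin (8+k)))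
  rw [key, cvec_six] at hle
  nlinarith [hv ⟨6, by omega⟩]
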